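/- arXiv:0804.3029 — 3 statements merged into one kernel-verified Lean document; each statement's English description precedes it below -/
import Mathlib

section
/- Let ℓ ≥ 1 be a fixed integer and let ρ ∈ [0,1). For each n let r = ⌊ρn⌋. Then liminf_{n→∞} (1/n)·log₂ M_r^{(≤ℓ)}(n) ≥ 1 − h(ρ), where the liminf is taken over those n for which an (r,≤ℓ)-identifying code in 𝔽ⁿ exists. -/
open Finset

/-- The Hamming ball of radius `r` around `x` in `𝔽ⁿ = {0,1}ⁿ`. -/
def ballH (n r : ℕ) (x : Fin n → Bool) : Finset (Fin n → Bool) :=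
  Finset.univ.filter (fun y => hammingDist x y ≤ r)

/-- `C` is an `(r, ≤ ℓ)`-identifying code in `𝔽ⁿ`. -/
def IdCode (n r ℓ : ℕ) (C : Finset (Fin n → Bool)) : Prop :=
  C.Nonempty ∧ ∀ X Y : Finset (Fin n → Bool),
    X.card ≤ ℓ → Y.card ≤ ℓ → X ≠ Y →
      (X.biUnion (ballH n r)) ∩ C ≠ (Y.biUnion (ballH n r)) ∩ C

/-- The smallest cardinality of an `(r, ≤ ℓ)`-identifying code in `𝔽ⁿ`. -/
noncomputable def Mid (n r ℓ : ℕ) : ℕ :=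
  sInf {k | ∃ C : Finset (Fin n → Bool), IdCode n r ℓ C ∧ C.card = k}

/-- binary entropy -/
noncomputable def binH (x : ℝ) : ℝ :=
  -(x * Real.logb 2 x) - (1 - x) * Real.logb 2 (1 - x)

/-- m_n(r,ℓ) -/
noncomputable def mlow (n r ℓ : ℕ) : ℕ :=
  sInf {k | ∃ X Y : Finset (Fin n → Bool), X ≠ Y ∧ 1 ≤ X.card ∧ X.card ≤ ℓ ∧
    1 ≤ Y.card ∧ Y.card ≤ ℓ ∧
    (symmDiff (X.biUnion (ballH n r)) (Y.biUnion (ballH n r))).card = k}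

/-- N_ℓ : the number of unordered pairs {X, Y} of distinct subsets with 1 ≤ card ≤ ℓ. -/
def Npairs (n ℓ : ℕ) : ℕ :=
  (((Finset.univ : Finset (Finset (Fin n → Bool))).filter
      (fun X => 1 ≤ X.card ∧ X.card ≤ ℓ)).powersetCard 2).card

/- ---------- Auxiliary lemmas ---------- -/

lemma mem_ballH {n r : ℕ} {x y : Fin n → Bool} : y ∈ ballH n r x ↔ hammingDist x y ≤ r := by
  simp [ballH]

lemma mem_ballH_comm {n r : ℕ} {x y : Fin n → Bool} : y ∈ ballH n r x ↔ x ∈ ballH n r y := by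
  rw [mem_ballH, mem_ballH, hammingDist_comm]

lemma ballH_card_shift (n r : ℕ) (c : Fin n → Bool) :
    (ballH n r c).card = (ballH n r (fun _ => false)).card := by
  apply Finset.card_nbij' (fun y => fun i => (y i != c i)) (fun z => fun i => (z i != c i))
  · intro y hy
    simp only [Finset.mem_coe] at hy ⊢
    rw [mem_ballH] at hy ⊢
    have : hammingDist (fun _ => false) (fun i => (y i != c i)) = hammingDist c y := by
      unfold hammingDist
      congr 1
      apply Finset.filter_congr
      intro i _
      cases hy2 : y i <;> cases hc : c i <;> simp [hy2, hc]
    omega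
  · intro z hz
    simp only [Finset.mem_coe] at hz ⊢
    rw [mem_ballH] at hz ⊢
    have : hammingDist c (fun i => (z i != c i)) = hammingDist (fun _ => false) z := by
      unfold hammingDist
      congr 1
      apply Finset.filter_congr
      intro i _
      cases hz2 : z i <;> cases hc : c i <;> simp [hz2, hc]
    omega
  · intro y _; funext i; cases hy2 : y i <;> cases hc : c i <;> simp [hy2, hc]
  · intro z _; funext i; cases hz2 : z i <;> cases hc : c i <;> simp [hz2, hc]

lemma ballH_zero_card (n r : ℕ) :
    (ballH n r (fun _ => false)).card = ∑ i ∈ range (r+1), n.choose i := by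
  have h1 : (ballH n r (fun _ => false)).card
      = (Finset.univ.filter (fun s : Finset (Fin n) => s.card ≤ r)).card := by
    apply Finset.card_nbij' (fun y => Finset.univ.filter (fun i => y i = true))
      (fun s => fun i => decide (i ∈ s))
    · intro y hy
      rw [Finset.mem_coe, mem_ballH] at hy
      simp only [Finset.mem_coe, Finset.mem_filter, Finset.mem_univ, true_and]
      have : hammingDist (fun _ => false) y = (Finset.univ.filter (fun i => y i = true)).card := by
        unfold hammingDist
        congr 1
        apply Finset.filter_congr
        intro i _
        cases hy2 : y i <;> simp [hy2]
      omega
    · intro s hs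
      simp only [Finset.mem_coe, Finset.mem_filter, Finset.mem_univ, true_and] at hs
      simp only [Finset.mem_coe]
      rw [mem_ballH]
      have : hammingDist (fun _ => false) (fun i => decide (i ∈ s)) = s.card := by
        unfold hammingDist
        have : (Finset.univ.filter
            (fun i => (fun _ => false : Fin n → Bool) i ≠ decide (i ∈ s))) = s := by
          ext i
          simp
        rw [this]
      omega
    · intro y _; funext i; simp
    · intro s _; ext i; simp
  rw [h1]
  have h2 : (Finset.univ.filter (fun s : Finset (Fin n) => s.card ≤ r))
      = (range (r+1)).biUnion
          (fun i => Finset.univ.filter (fun s : Finset (Fin n) => s.card = i)) := by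
    ext s
    simp [Nat.lt_succ_iff]
  rw [h2, Finset.card_biUnion]
  · apply Finset.sum_congr rfl
    intro i _
    have : Finset.univ.filter (fun s : Finset (Fin n) => s.card = i)
        = Finset.powersetCard i (Finset.univ : Finset (Fin n)) := by
      rw [Finset.powersetCard_eq_filter, Finset.powerset_univ]
    rw [this, Finset.card_powersetCard, Finset.card_univ, Fintype.card_fin]
  · intro i _ j _ hij
    simp only [Finset.disjoint_left, Finset.mem_filter]
    rintro s ⟨-, h1⟩ ⟨-, h2⟩
    omega

lemma sep_exists {n r ℓ : ℕ} {C : Finset (Fin n → Bool)} (hC : IdCode n r ℓ C) (hℓ : 1 ≤ ℓ)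
    {x y : Fin n → Bool} (hxy : x ≠ y) :
    ∃ c ∈ C, ¬(x ∈ ballH n r c ↔ y ∈ ballH n r c) := by
  have h := hC.2 {x} {y} (by simp [hℓ]) (by simp [hℓ]) (by simpa using hxy)
  rw [Finset.singleton_biUnion, Finset.singleton_biUnion] at h
  by_contra hcon
  push_neg at hcon
  apply h
  ext c
  simp only [Finset.mem_inter]
  constructor
  · rintro ⟨h1, h2⟩
    exact ⟨((hcon c h2).mp (mem_ballH_comm.mp h1) : _) |> mem_ballH_comm.mpr, h2⟩
  · rintro ⟨h1, h2⟩
    exact ⟨((hcon c h2).mpr (mem_ballH_comm.mp h1) : _) |> mem_ballH_comm.mpr, h2⟩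

lemma count_key {n r ℓ : ℕ} {C : Finset (Fin n → Bool)} (hC : IdCode n r ℓ C) (hℓ : 1 ≤ ℓ) :
    2^n * (2^n - 1) ≤ C.card * (2 * (ballH n r (fun _ => false)).card
      * (2^n - (ballH n r (fun _ => false)).card)) := by
  classical
  set V := (ballH n r (fun _ => false)).card with hV
  have hcard : Fintype.card (Fin n → Bool) = 2^n := by
    simp [Fintype.card_fun]
  set P := (Finset.univ : Finset (Fin n → Bool)).offDiag with hP
  have hPcard : P.card = 2^n * (2^n - 1) := by
    rw [hP, Finset.offDiag_card, Finset.card_univ, hcard]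
    rw [Nat.mul_sub, mul_one]
  have hsub : P ⊆ C.biUnion (fun c => P.filter
      (fun p => ¬(p.1 ∈ ballH n r c ↔ p.2 ∈ ballH n r c))) := by
    intro p hp
    rw [Finset.mem_offDiag] at hp
    obtain ⟨c, hcC, hc⟩ := sep_exists hC hℓ hp.2.2
    rw [Finset.mem_biUnion]
    exact ⟨c, hcC, by rw [Finset.mem_filter]; exact ⟨by rw [hP, Finset.mem_offDiag]; exact hp, hc⟩⟩
  have hfil : ∀ c : Fin n → Bool,
      (P.filter (fun p => ¬(p.1 ∈ ballH n r c ↔ p.2 ∈ ballH n r c))).card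
        ≤ 2 * V * (2^n - V) := by
    intro c
    set B := ballH n r c with hB
    have hBc : B.card = V := ballH_card_shift n r c
    have hsub2 : P.filter (fun p => ¬(p.1 ∈ ballH n r c ↔ p.2 ∈ ballH n r c))
        ⊆ (B ×ˢ (Finset.univ \ B)) ∪ ((Finset.univ \ B) ×ˢ B) := by
      intro p hp
      rw [Finset.mem_filter] at hp
      rw [Finset.mem_union, Finset.mem_product, Finset.mem_product]
      simp only [Finset.mem_sdiff, Finset.mem_univ, true_and]
      by_cases h1 : p.1 ∈ B
      · left; exact ⟨h1, fun h2 => hp.2 ⟨fun _ => h2, fun _ => h1⟩⟩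
      · right; exact ⟨h1, by
          by_contra h2
          exact hp.2 ⟨fun h => absurd h h1, fun h => absurd h h2⟩⟩
    calc (P.filter (fun p => ¬(p.1 ∈ ballH n r c ↔ p.2 ∈ ballH n r c))).card
        ≤ ((B ×ˢ (Finset.univ \ B)) ∪ ((Finset.univ \ B) ×ˢ B)).card :=
          Finset.card_le_card hsub2
      _ ≤ (B ×ˢ (Finset.univ \ B)).card + ((Finset.univ \ B) ×ˢ B).card :=
          Finset.card_union_le _ _
      _ = 2 * V * (2^n - V) := by
          rw [Finset.card_product, Finset.card_product, Finset.card_sdiff_of_subset (Finset.subset_univ B),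
            Finset.card_univ, hcard, hBc]
          ring
  calc 2^n * (2^n - 1) = P.card := hPcard.symm
    _ ≤ (C.biUnion (fun c => P.filter
          (fun p => ¬(p.1 ∈ ballH n r c ↔ p.2 ∈ ballH n r c)))).card := Finset.card_le_card hsub
    _ ≤ ∑ c ∈ C, (P.filter (fun p => ¬(p.1 ∈ ballH n r c ↔ p.2 ∈ ballH n r c))).card :=
          Finset.card_biUnion_le
    _ ≤ ∑ _c ∈ C, 2 * V * (2^n - V) := Finset.sum_le_sum (fun c _ => hfil c)
    _ = C.card * (2 * V * (2^n - V)) := by rw [Finset.sum_const, smul_eq_mul]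

lemma compl_sum_choose (n r : ℕ) (hr : r < n) :
    2^n - ∑ i ∈ range (r+1), n.choose i = ∑ j ∈ range (n-r), n.choose j := by
  have htot : ∑ i ∈ range (n+1), n.choose i = 2^n := Nat.sum_range_choose n
  have hsplit : ∑ i ∈ range (r+1), n.choose i + ∑ i ∈ Ico (r+1) (n+1), n.choose i
      = ∑ i ∈ range (n+1), n.choose i := by
    rw [Finset.range_eq_Ico, Finset.range_eq_Ico]
    exact Finset.sum_Ico_consecutive (fun i => n.choose i) (m := 0) (n := r+1) (k := n+1) (by omega) (by omega)
  have hre : ∑ i ∈ Ico (r+1) (n+1), n.choose i = ∑ j ∈ range (n-r), n.choose j := by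
    apply Finset.sum_nbij' (fun i => n - i) (fun j => n - j)
    · intro i hi; simp only [Finset.mem_Ico] at hi; simp only [Finset.mem_range]; omega
    · intro j hj; simp only [Finset.mem_range] at hj; simp only [Finset.mem_Ico]; omega
    · intro i hi; simp only [Finset.mem_Ico] at hi; omega
    · intro j hj; simp only [Finset.mem_range] at hj; omega
    · intro i hi; simp only [Finset.mem_Ico] at hi
      exact (Nat.choose_symm (by omega)).symm
  omega

lemma logb_sum_choose_le (n k : ℕ) (p : ℝ) (hp0 : 0 < p) (hp : p ≤ 1/2)
    (hk : (k:ℝ) ≤ p * n) :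
    Real.logb 2 (∑ i ∈ range (k+1), (n.choose i : ℝ)) ≤ n * binH p := by
  have h1p : 0 < 1 - p := by linarith
  set x := p / (1-p) with hxdef
  have hx0 : 0 < x := div_pos hp0 h1p
  have hx1 : x ≤ 1 := by
    rw [div_le_one h1p]; linarith
  have hkn : k ≤ n := by
    have : (k:ℝ) ≤ n := le_trans hk (by nlinarith [Nat.cast_nonneg (α := ℝ) n])
    exact_mod_cast this
  set S := ∑ i ∈ range (k+1), (n.choose i : ℝ) with hSdef
  have hS1 : 1 ≤ S := by
    rw [hSdef]
    calc (1:ℝ) = (n.choose 0 : ℝ) := by simp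
      _ ≤ S := Finset.single_le_sum (f := fun i => (n.choose i : ℝ))
          (fun i _ => by positivity) (by simp)
  have hS0 : 0 < S := lt_of_lt_of_le one_pos hS1
  have step1 : S * x^k ≤ (1+x)^n := by
    calc S * x^k = ∑ i ∈ range (k+1), (n.choose i : ℝ) * x^k := by
          rw [Finset.sum_mul]
      _ ≤ ∑ i ∈ range (k+1), (n.choose i : ℝ) * x^i := by
          apply Finset.sum_le_sum
          intro i hi
          have hik : i ≤ k := Nat.lt_succ_iff.mp (Finset.mem_range.mp hi)
          have := pow_le_pow_of_le_one hx0.le hx1 hik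
          exact mul_le_mul_of_nonneg_left this (by positivity)
      _ ≤ ∑ i ∈ range (n+1), (n.choose i : ℝ) * x^i := by
          apply Finset.sum_le_sum_of_subset_of_nonneg
          · exact Finset.range_subset_range.mpr (by omega)
          · intro i _ _; positivity
      _ = (1+x)^n := by
          rw [add_comm (1:ℝ) x, add_pow]
          apply Finset.sum_congr rfl
          intro i _
          ring
  have step2 : S ≤ (1+x)^n / x^k := by
    rw [le_div_iff₀ (pow_pos hx0 k)]
    exact step1
  have step3 : Real.logb 2 S ≤ n * Real.logb 2 (1+x) - k * Real.logb 2 x := by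
    calc Real.logb 2 S ≤ Real.logb 2 ((1+x)^n / x^k) :=
          Real.logb_le_logb_of_le one_lt_two hS0 step2
      _ = n * Real.logb 2 (1+x) - k * Real.logb 2 x := by
          rw [Real.logb_div (by positivity) (by positivity), Real.logb_pow, Real.logb_pow]
  have hlogx : Real.logb 2 x ≤ 0 := Real.logb_nonpos one_lt_two hx0.le hx1
  have step4 : (n:ℝ) * Real.logb 2 (1+x) - k * Real.logb 2 x
      ≤ n * Real.logb 2 (1+x) - (p*n) * Real.logb 2 x := by
    nlinarith [hk, hlogx]
  have h1x : 1 + x = (1-p)⁻¹ := by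
    rw [hxdef]
    field_simp
    ring
  have step5 : (n:ℝ) * Real.logb 2 (1+x) - (p*n) * Real.logb 2 x = n * binH p := by
    rw [h1x, Real.logb_inv, hxdef, Real.logb_div (ne_of_gt hp0) (ne_of_gt h1p)]
    unfold binH
    ring
  linarith

lemma binH_symm (p : ℝ) : binH (1 - p) = binH p := by
  unfold binH
  rw [sub_sub_cancel]
  ring

lemma binH_zero : binH 0 = 0 := by
  unfold binH
  simp

lemma Mid_nat_bound (n r ℓ : ℕ) (hℓ : 1 ≤ ℓ)
    (hex : ∃ C : Finset (Fin n → Bool), IdCode n r ℓ C) :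
    2^n * (2^n - 1) ≤ Mid n r ℓ * (2 * (∑ i ∈ range (r+1), n.choose i)
      * (2^n - ∑ i ∈ range (r+1), n.choose i)) := by
  obtain ⟨C, hC⟩ := hex
  have hne : {k | ∃ C : Finset (Fin n → Bool), IdCode n r ℓ C ∧ C.card = k}.Nonempty :=
    ⟨C.card, C, hC, rfl⟩
  obtain ⟨C₀, hC₀, hcard⟩ := Nat.sInf_mem hne
  rw [Mid, ← hcard, ← ballH_zero_card]
  exact count_key hC₀ hℓ

set_option maxHeartbeats 2000000 in
/-- For fixed `ℓ ≥ 1`, `ρ ∈ [0,1)` and `r = ⌊ρn⌋`,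
`liminf (1/n)·log₂ M_r^{(≤ℓ)}(n) ≥ 1 - h(ρ)`, the liminf being over those `n` for which
an `(r,≤ℓ)`-identifying code exists. -/
theorem Mid_log_liminf_lower_bound (ℓ : ℕ) (hℓ : 1 ≤ ℓ) (ρ : ℝ) (hρ0 : 0 ≤ ρ)
    (hρ1 : ρ < 1) :
    ∀ ε : ℝ, 0 < ε → ∃ n₀ : ℕ, ∀ n : ℕ, n₀ ≤ n →
      (∃ C : Finset (Fin n → Bool), IdCode n ⌊ρ * n⌋₊ ℓ C) →
      1 - binH ρ - ε ≤ Real.logb 2 (Mid n ⌊ρ * n⌋₊ ℓ) / n := by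
  intro ε hε
  refine ⟨max 1 ⌈2/ε⌉₊, fun n hn hex => ?_⟩
  have hn1 : 1 ≤ n := le_trans (le_max_left _ _) hn
  have hnR : (0:ℝ) < n := by exact_mod_cast hn1
  set r := ⌊ρ * n⌋₊ with hrdef
  have hrρ : (r:ℝ) ≤ ρ * n := Nat.floor_le (by positivity)
  have hρr1 : ρ * n < r + 1 := Nat.lt_floor_add_one _
  have hrn : r < n := by
    have h1 : ρ * n < n := by nlinarith
    have : (r:ℝ) < n := lt_of_le_of_lt hrρ h1
    exact_mod_cast this
  set V := ∑ i ∈ range (r+1), n.choose i with hVdef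
  set N := 2^n with hNdef
  set M := Mid n r ℓ with hMdef
  have hVN : V ≤ N := by
    rw [hVdef, hNdef, ← Nat.sum_range_choose n]
    apply Finset.sum_le_sum_of_subset
    exact Finset.range_subset_range.mpr (by omega)
  have hV1 : 1 ≤ V := by
    rw [hVdef]
    calc 1 = n.choose 0 := by simp
      _ ≤ _ := Finset.single_le_sum (f := fun i => n.choose i) (fun i _ => Nat.zero_le _)
          (by simp)
  have hcompl : N - V = ∑ j ∈ range (n-r), n.choose j := compl_sum_choose n r hrn
  have hNV1 : 1 ≤ N - V := by
    rw [hcompl]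
    calc 1 = n.choose 0 := by simp
      _ ≤ _ := Finset.single_le_sum (f := fun i => n.choose i) (fun i _ => Nat.zero_le _)
          (by simp [Nat.sub_pos_of_lt hrn])
  have hVltN : V < N := by omega
  have hN2 : 2 ≤ N := by
    rw [hNdef]
    calc 2 = 2^1 := by norm_num
      _ ≤ 2^n := Nat.pow_le_pow_right (by norm_num) hn1
  have hnat : N * (N - 1) ≤ M * (2 * V * (N - V)) := Mid_nat_bound n r ℓ hℓ hex
  have hM1 : 1 ≤ M := by
    by_contra h
    push_neg at h
    interval_cases M
    simp at hnat
    omega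
  -- пере real
  have hVr : (0:ℝ) < (V:ℝ) := by exact_mod_cast hV1
  have hNVr : (0:ℝ) < ((N - V : ℕ):ℝ) := by exact_mod_cast hNV1
  have hNr : (0:ℝ) < (N:ℝ) := by positivity
  have hMr : (0:ℝ) < (M:ℝ) := by exact_mod_cast hM1
  have hW1 : (1:ℝ) ≤ (N:ℝ) - (V:ℝ) := by
    have h := (Nat.cast_le (α := ℝ)).mpr hNV1
    push_cast [Nat.cast_sub hVltN.le] at h
    linarith
  have hWr : (0:ℝ) < (N:ℝ) - (V:ℝ) := by linarith
  have hN2r : (2:ℝ) ≤ (N:ℝ) := by exact_mod_cast hN2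
  have hreal : (N:ℝ) * ((N:ℝ) - 1) ≤ (M:ℝ) * (2 * (V:ℝ) * ((N:ℝ) - (V:ℝ))) := by
    have h := (Nat.cast_le (α := ℝ)).mpr hnat
    push_cast [Nat.cast_sub hVltN.le, Nat.cast_sub (show 1 ≤ N by omega)] at h
    linarith
  have hMge : (N:ℝ)^2 / (4 * (V:ℝ) * ((N:ℝ) - (V:ℝ))) ≤ (M:ℝ) := by
    rw [div_le_iff₀ (by positivity)]
    nlinarith
  have hlogN : Real.logb 2 (N:ℝ) = n := by
    rw [hNdef]
    push_cast
    rw [Real.logb_pow, Real.logb_self_eq_one one_lt_two, mul_one]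
  have hlogM : 2*(n:ℝ) - 2 - Real.logb 2 (V:ℝ) - Real.logb 2 ((N:ℝ) - (V:ℝ))
      ≤ Real.logb 2 (M:ℝ) := by
    have h1 : Real.logb 2 ((N:ℝ)^2 / (4 * (V:ℝ) * ((N:ℝ) - (V:ℝ)))) ≤ Real.logb 2 (M:ℝ) :=
      Real.logb_le_logb_of_le one_lt_two (by positivity) hMge
    have h2 : Real.logb 2 ((N:ℝ)^2 / (4 * (V:ℝ) * ((N:ℝ) - (V:ℝ))))
        = 2*(n:ℝ) - (Real.logb 2 4 + Real.logb 2 (V:ℝ) + Real.logb 2 ((N:ℝ) - (V:ℝ))) := by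
      rw [Real.logb_div (by positivity) (by positivity), Real.logb_pow,
        Real.logb_mul (by positivity) (by positivity),
        Real.logb_mul (by positivity) (by positivity), hlogN]
      ring
    have h4 : Real.logb 2 (4:ℝ) = 2 := by
      have : (4:ℝ) = 2^(2:ℕ) := by norm_num
      rw [this, Real.logb_pow, Real.logb_self_eq_one one_lt_two]
      norm_num
    rw [h2, h4] at h1
    linarith
  have hlogV_le : Real.logb 2 (V:ℝ) ≤ n := by
    calc Real.logb 2 (V:ℝ) ≤ Real.logb 2 (N:ℝ) :=
          Real.logb_le_logb_of_le one_lt_two hVr (by exact_mod_cast hVN)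
      _ = n := hlogN
  have hlogW_le : Real.logb 2 ((N:ℝ) - (V:ℝ)) ≤ n := by
    calc Real.logb 2 ((N:ℝ) - (V:ℝ)) ≤ Real.logb 2 (N:ℝ) :=
          Real.logb_le_logb_of_le one_lt_two hWr (by linarith)
      _ = n := hlogN
  have hkey : Real.logb 2 (V:ℝ) + Real.logb 2 ((N:ℝ) - (V:ℝ)) ≤ n + n * binH ρ := by
    by_cases hhalf : ρ ≤ 1/2
    · by_cases hρz : ρ = 0
      · have hr0 : r = 0 := by rw [hrdef, hρz]; simp
        have hVone : V = 1 := by rw [hVdef, hr0]; simp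
        have hbz : binH ρ = 0 := by rw [hρz]; exact binH_zero
        have hlv : Real.logb 2 (V:ℝ) = 0 := by rw [hVone]; norm_num
        rw [hbz]
        linarith [hlv, hlogW_le]
      · have hρpos : 0 < ρ := lt_of_le_of_ne hρ0 (Ne.symm hρz)
        have hVcast : ((V:ℕ):ℝ) = ∑ i ∈ range (r+1), (n.choose i : ℝ) := by
          rw [hVdef]; push_cast; rfl
        have h1 : Real.logb 2 (V:ℝ) ≤ n * binH ρ := by
          rw [hVcast]
          exact logb_sum_choose_le n r ρ hρpos hhalf hrρ
        linarith
    · push_neg at hhalf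
      have hp0 : 0 < 1 - ρ := by linarith
      have hp : 1 - ρ ≤ 1/2 := by linarith
      have hWcast : (N:ℝ) - (V:ℝ) = ∑ j ∈ range ((n-r-1)+1), (n.choose j : ℝ) := by
        have h2 : (n-r-1)+1 = n-r := by omega
        rw [h2]
        have h1 : ((N - V : ℕ):ℝ) = ((∑ j ∈ range (n-r), n.choose j : ℕ):ℝ) :=
          Nat.cast_inj.mpr hcompl
        push_cast [Nat.cast_sub hVltN.le] at h1
        exact h1
      have hkR : ((n-r-1 : ℕ):ℝ) ≤ (1-ρ) * n := by
        have h1 : ((n-r-1:ℕ):ℝ) = (n:ℝ) - (r:ℝ) - 1 := by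
          push_cast [Nat.cast_sub (show r ≤ n by omega), Nat.cast_sub (show 1 ≤ n - r by omega)]
          ring
        rw [h1]
        nlinarith
      have h2 : Real.logb 2 ((N:ℝ) - (V:ℝ)) ≤ n * binH (1 - ρ) := by
        rw [hWcast]
        exact logb_sum_choose_le n (n-r-1) (1-ρ) hp0 hp hkR
      rw [binH_symm] at h2
      linarith
  have hlog_ge : (n:ℝ) - 2 - n * binH ρ ≤ Real.logb 2 (M:ℝ) := by linarith
  have hceil : (2/ε : ℝ) ≤ n := by
    calc (2/ε : ℝ) ≤ (⌈2/ε⌉₊ : ℝ) := Nat.le_ceil _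
      _ ≤ n := by exact_mod_cast le_trans (le_max_right _ _) hn
  have h2n : 2 / (n:ℝ) ≤ ε := by
    rw [div_le_iff₀ hnR]
    calc (2:ℝ) = ε * (2/ε) := by field_simp
      _ ≤ ε * n := by
        apply mul_le_mul_of_nonneg_left hceil (le_of_lt hε)
  calc 1 - binH ρ - ε ≤ 1 - binH ρ - 2/(n:ℝ) := by linarith
    _ = ((n:ℝ) - 2 - n * binH ρ) / n := by field_simp; ring
    _ ≤ Real.logb 2 (M:ℝ) / n := (div_le_div_iff_of_pos_right hnR).mpr hlog_ge
end

section
/- Let n be odd and let C₀ = {c₀, c₁, …, c_n} ⊆ 𝔽ⁿ where c₀ = 0 (the all-zero word) and supp(c_i) = {1, 2, …, i} for i = 1, …, n. Then for every word x ∈ 𝔽ⁿ there exists an index i ∈ {0, 1, …, n} with d(x, c_i) = (n−1)/2. -/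
open Finset

lemma nat_ivt (f : ℕ → ℕ) (t : ℕ) : ∀ n : ℕ, (∀ i, i < n → f (i+1) ≤ f i + 1) →
    f 0 ≤ t → t ≤ f n → ∃ i ≤ n, f i = t := by
  intro n
  induction n with
  | zero => intro _ h0 h1; exact ⟨0, le_refl 0, le_antisymm h0 h1⟩
  | succ n ih =>
    intro hstep h0 h1
    by_cases ht : t ≤ f n
    · obtain ⟨i, hi, hfi⟩ := ih (fun i hi => hstep i (Nat.lt_succ_of_lt hi)) h0 ht
      exact ⟨i, hi.trans (Nat.le_succ n), hfi⟩
    · push_neg at ht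
      refine ⟨n + 1, le_refl _, le_antisymm ?_ h1⟩
      calc f (n+1) ≤ f n + 1 := hstep n (Nat.lt_succ_self n)
        _ ≤ t := ht

lemma step_dist (n : ℕ) (i : ℕ) (hi : i < n) :
    hammingDist (fun j : Fin n => decide (j.val < i)) (fun j : Fin n => decide (j.val < i+1)) ≤ 1 := by
  unfold hammingDist
  have : ({j | (fun j : Fin n => decide (j.val < i)) j ≠ (fun j : Fin n => decide (j.val < i+1)) j} : Finset (Fin n)) ⊆ {⟨i, hi⟩} := by
    intro j hj
    simp only [mem_filter, mem_univ, true_and] at hj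
    simp only [mem_singleton]
    by_contra hne
    apply hj
    have : j.val ≠ i := fun h => hne (Fin.ext h)
    rcases Nat.lt_or_ge j.val i with h | h
    · simp [h, Nat.lt_succ_of_lt h]
    · have h2 : ¬ j.val < i := Nat.not_lt.mpr h
      have h3 : ¬ j.val < i + 1 := by omega
      simp [h2, h3]
  calc _ ≤ ({⟨i, hi⟩} : Finset (Fin n)).card := card_le_card this
    _ = 1 := card_singleton _

/-- For odd `n` and `C₀ = {c₀, …, c_n}` with `supp(c_i) = {1, …, i}`
(here: the first `i` coordinates), every word `x ∈ 𝔽ⁿ` is at distance exactly `(n-1)/2`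
from some `c_i`. -/
theorem exists_codeword_at_half_distance_odd (n : ℕ) (hn : Odd n) (x : Fin n → Bool) :
    ∃ i ≤ n, hammingDist x (fun j : Fin n => decide (j.val < i)) = (n - 1) / 2 := by
  set f : ℕ → ℕ := fun i => hammingDist x (fun j : Fin n => decide (j.val < i)) with hf
  have hsum : f 0 + f n = n := by
    have h0 : f 0 = #{j : Fin n | x j = true} := by
      simp only [hf]
      unfold hammingDist
      congr 1
      apply Finset.filter_congr
      intro j _
      simp
    have h1 : f n = #{j : Fin n | ¬ x j = true} := by
      simp only [hf]
      unfold hammingDist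
      congr 1
      apply Finset.filter_congr
      intro j _
      simp [j.isLt]
    rw [h0, h1, Finset.card_filter_add_card_filter_not, card_univ, Fintype.card_fin]
  have hstep : ∀ i, i < n → f (i+1) ≤ f i + 1 := by
    intro i hi
    calc f (i+1) ≤ f i + hammingDist (fun j : Fin n => decide (j.val < i)) (fun j : Fin n => decide (j.val < i+1)) := hammingDist_triangle _ _ _
      _ ≤ f i + 1 := by have := step_dist n i hi; omega
  have hstep' : ∀ i, i < n → f i ≤ f (i+1) + 1 := by
    intro i hi
    calc f i ≤ f (i+1) + hammingDist (fun j : Fin n => decide (j.val < i+1)) (fun j : Fin n => decide (j.val < i)) := hammingDist_triangle _ _ _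
      _ ≤ f (i+1) + 1 := by
        rw [hammingDist_comm]
        have := step_dist n i hi; omega
  obtain ⟨m, hm⟩ := hn
  have ht : (n - 1) / 2 = m := by omega
  rw [ht]
  by_cases hle : f 0 ≤ m
  · have : m ≤ f n := by omega
    obtain ⟨i, hi, hfi⟩ := nat_ivt f m n hstep hle this
    exact ⟨i, hi, hfi⟩
  · push_neg at hle
    set g : ℕ → ℕ := fun i => f (n - i) with hg
    have h0 : g 0 ≤ m := by simp only [hg, Nat.sub_zero]; omega
    have h1 : m ≤ g n := by simp only [hg, Nat.sub_self]; omega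
    have hgstep : ∀ i, i < n → g (i+1) ≤ g i + 1 := by
      intro i hi
      have h2 : n - i = (n - (i+1)) + 1 := by omega
      have := hstep' (n - (i+1)) (by omega)
      simp only [hg]
      rw [h2]
      omega
    obtain ⟨i, hi, hfi⟩ := nat_ivt g m n hgstep h0 h1
    exact ⟨n - i, Nat.sub_le n i, hfi⟩
end

section
/- Let n be even and let C₀ = {c₀, c₁, …, c_n} ⊆ 𝔽ⁿ where c₀ = 0 and supp(c_i) = {1, 2, …, i} for i = 1, …, n, and let C_u = {a ∈ 𝔽ⁿ : a ∈ C₀ or ā ∈ C₀}. Then for every word x ∈ 𝔽ⁿ there exists a ∈ C_u with d(x, a) = d(x, ā) = n/2. -/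
open Finset

private lemma ivt_up (g : ℕ → ℕ) (h : ∀ i, g (i + 1) ≤ g i + 1) (m : ℕ) :
    ∀ N, g 0 ≤ m → m ≤ g N → ∃ i ≤ N, g i = m := by
  intro N
  induction N with
  | zero => intro h0 hN; exact ⟨0, le_refl 0, le_antisymm h0 hN⟩
  | succ N ih =>
    intro h0 hN
    by_cases hm : m ≤ g N
    · obtain ⟨i, hi, hg⟩ := ih h0 hm
      exact ⟨i, hi.trans (Nat.le_succ N), hg⟩
    · push_neg at hm
      refine ⟨N + 1, le_refl _, le_antisymm ((h N).trans hm) hN⟩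

private lemma ham_compl (n : ℕ) (x y : Fin n → Bool) :
    hammingDist x (fun j => !y j) = n - hammingDist x y := by
  have h1 : hammingDist x y + hammingDist x (fun j => !y j) = n := by
    unfold hammingDist
    have : (Finset.univ.filter fun i => x i ≠ (fun j => !y j) i)
        = Finset.univ.filter fun i => ¬ (x i ≠ y i) := by
      apply Finset.filter_congr
      intro i _
      simp only [ne_eq, not_not]
      constructor
      · intro h; cases hx : x i <;> cases hy : y i <;> simp_all
      · intro h; cases hx : x i <;> cases hy : y i <;> simp_all
    rw [this, Finset.card_filter_add_card_filter_not]
    simp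
  omega

/-- For even `n`, with `C₀ = {c₀, …, c_n}` (`supp(c_i)` the first `i`
coordinates) and `C_u = C₀ ∪ {ā : a ∈ C₀}`, every word `x ∈ 𝔽ⁿ` satisfies
`d(x,a) = d(x,ā) = n/2` for some `a ∈ C_u`. -/
theorem exists_codeword_at_half_distance_even (n : ℕ) (hn : Even n) (x : Fin n → Bool) :
    ∃ a : Fin n → Bool,
      ((∃ i ≤ n, a = fun j : Fin n => decide (j.val < i)) ∨
        (∃ i ≤ n, (fun j => !a j) = fun j : Fin n => decide (j.val < i))) ∧
      hammingDist x a = n / 2 ∧ hammingDist x (fun j => !a j) = n / 2 := by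
  obtain ⟨k, hk⟩ := hn
  set g : ℕ → ℕ := fun i => hammingDist x (fun j : Fin n => decide (j.val < i)) with hg
  have hstep : ∀ i, hammingDist (fun j : Fin n => decide (j.val < i))
      (fun j : Fin n => decide (j.val < i + 1)) ≤ 1 := by
    intro i
    unfold hammingDist
    apply Finset.card_le_one.2
    intro a ha b hb
    simp only [Finset.mem_filter, ne_eq, decide_eq_decide] at ha hb
    have ha' : a.val = i := by omega
    have hb' : b.val = i := by omega
    exact Fin.ext (ha'.trans hb'.symm)
  have hup : ∀ i, g (i + 1) ≤ g i + 1 := by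
    intro i
    have t := hammingDist_triangle x (fun j : Fin n => decide (j.val < i))
      (fun j : Fin n => decide (j.val < i + 1))
    have hs := hstep i
    show hammingDist x (fun j : Fin n => decide (j.val < i + 1)) ≤
      hammingDist x (fun j : Fin n => decide (j.val < i)) + 1
    omega
  have hdown : ∀ i, g i ≤ g (i + 1) + 1 := by
    intro i
    have t := hammingDist_triangle x (fun j : Fin n => decide (j.val < i + 1))
      (fun j : Fin n => decide (j.val < i))
    have hc := hammingDist_comm (fun j : Fin n => decide (j.val < i + 1))
      (fun j : Fin n => decide (j.val < i))
    have hs := hstep i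
    show hammingDist x (fun j : Fin n => decide (j.val < i)) ≤
      hammingDist x (fun j : Fin n => decide (j.val < i + 1)) + 1
    omega
  have hcompl0 : ∀ y : Fin n → Bool, hammingDist x y ≤ n := by
    intro y
    have := hammingDist_le_card_fintype (x := x) (y := y)
    simpa using this
  have hgn : g n = n - g 0 := by
    have heq : (fun j : Fin n => decide (j.val < n)) =
        fun j : Fin n => !((fun j : Fin n => decide (j.val < 0)) j) := by
      funext j; simp [j.isLt]
    show hammingDist x (fun j : Fin n => decide (j.val < n)) =
      n - hammingDist x (fun j : Fin n => decide (j.val < 0))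
    rw [heq, ham_compl]
  have hhalf : n / 2 = k := by omega
  have key : ∃ i ≤ n, g i = n / 2 := by
    by_cases h0 : g 0 ≤ n / 2
    · apply ivt_up g hup (n / 2) n h0
      have := hcompl0 (fun j : Fin n => decide (j.val < 0))
      omega
    · push_neg at h0
      have hgn' : g n ≤ n / 2 := by
        have := hcompl0 (fun j : Fin n => decide (j.val < 0))
        omega
      obtain ⟨i, hi, hgi⟩ := ivt_up (fun i => g (n - i)) (by
        intro i
        show g (n - (i + 1)) ≤ g (n - i) + 1
        by_cases hin : i < n
        · have hd := hdown (n - (i + 1))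
          have he : n - (i + 1) + 1 = n - i := by omega
          rw [he] at hd
          exact hd
        · have he : n - (i + 1) = n - i := by omega
          rw [he]; omega) (n / 2) n (by simpa using hgn') (by simpa using le_of_lt h0)
      exact ⟨n - i, by omega, hgi⟩
  obtain ⟨i, hi, hgi⟩ := key
  have hgi' : hammingDist x (fun j : Fin n => decide (j.val < i)) = n / 2 := hgi
  refine ⟨fun j : Fin n => decide (j.val < i), Or.inl ⟨i, hi, rfl⟩, hgi', ?_⟩
  rw [ham_compl, hgi']
  omega
end
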